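/- arXiv:2011.08629 — 4 statements merged into one kernel-verified Lean document; each statement's English description precedes it below -/
import Mathlib

section
/- Let $X$ be a uniformly convex normed linear space with modulus of convexity $\delta$. Let $\varepsilon > 0$, $d > 0$, $\lambda \in [0,1]$, and suppose $\phi, \psi \in X$ satisfy $\|\psi\| \le \|\phi\| \le d$ and $\|\phi - \psi\| \ge \varepsilon$. Then $\|(1-\lambda)\phi + \lambda\psi\| \le \|\phi\| \big(1 - 2\delta(\varepsilon/d) \min\{\lambda, 1-\lambda\}\big)$. -/
/-- Groetsch's lemma on uniformly convex spaces. -/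
theorem groetsch_convexity_lemma
    {X : Type*} [NormedAddCommGroup X] [NormedSpace ℝ X]
    (δ : ℝ → ℝ)
    (hδconv : ∀ ε : ℝ, 0 < ε → ε ≤ 2 → ∀ x y : X,
      ‖x‖ ≤ 1 → ‖y‖ ≤ 1 → ε ≤ ‖x - y‖ → ‖(1 / 2 : ℝ) • (x + y)‖ ≤ 1 - δ ε)
    (hδpos : ∀ ε : ℝ, 0 < ε → ε ≤ 2 → 0 < δ ε ∧ δ ε ≤ 1)
    (ε d lam : ℝ) (hε : 0 < ε) (hd : 0 < d) (hlam0 : 0 ≤ lam) (hlam1 : lam ≤ 1)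
    (φ ψ : X) (h1 : ‖ψ‖ ≤ ‖φ‖) (h2 : ‖φ‖ ≤ d) (h3 : ε ≤ ‖φ - ψ‖) :
    ‖(1 - lam) • φ + lam • ψ‖ ≤ ‖φ‖ * (1 - 2 * δ (ε / d) * min lam (1 - lam)) := by
  have hsub : ‖φ - ψ‖ ≤ 2 * ‖φ‖ := by
    calc ‖φ - ψ‖ ≤ ‖φ‖ + ‖ψ‖ := norm_sub_le _ _
      _ ≤ 2 * ‖φ‖ := by linarith
  have hφpos : 0 < ‖φ‖ := by nlinarith
  have hεd1 : 0 < ε / d := div_pos hε hd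
  have hεd2 : ε / d ≤ 2 := by
    rw [div_le_iff₀ hd]; nlinarith
  set c : ℝ := ‖φ‖⁻¹ with hc
  have hcpos : 0 < c := inv_pos.2 hφpos
  have hx : ‖c • φ‖ ≤ 1 := by
    rw [norm_smul, Real.norm_eq_abs, abs_of_pos hcpos, hc,
      inv_mul_cancel₀ hφpos.ne']
  have hy : ‖c • ψ‖ ≤ 1 := by
    rw [norm_smul, Real.norm_eq_abs, abs_of_pos hcpos]
    calc c * ‖ψ‖ ≤ c * ‖φ‖ := by nlinarith
      _ = 1 := inv_mul_cancel₀ hφpos.ne'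
  have hxy : ε / d ≤ ‖c • φ - c • ψ‖ := by
    rw [← smul_sub, norm_smul, Real.norm_eq_abs, abs_of_pos hcpos, hc,
      div_le_iff₀ hd]
    rw [inv_mul_eq_div, div_mul_eq_mul_div, le_div_iff₀ hφpos]
    nlinarith
  have hmid := hδconv (ε / d) hεd1 hεd2 _ _ hx hy hxy
  rw [← smul_add, smul_smul, norm_smul, Real.norm_eq_abs,
    abs_of_pos (by positivity : (0:ℝ) < 1 / 2 * c)] at hmid
  have hmid' : ‖φ + ψ‖ ≤ 2 * ‖φ‖ * (1 - δ (ε / d)) := by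
    have h := mul_le_mul_of_nonneg_left hmid (by positivity : (0:ℝ) ≤ 2 * ‖φ‖)
    calc ‖φ + ψ‖ = 2 * ‖φ‖ * (1 / 2 * c * ‖φ + ψ‖) := by
          field_simp [hc]
          rw [hc, mul_assoc, mul_inv_cancel₀ hφpos.ne', mul_one]
      _ ≤ 2 * ‖φ‖ * (1 - δ (ε / d)) := h
  rcases le_total lam (1 - lam) with hl | hl
  · rw [min_eq_left hl]
    have heq : (1 - lam) • φ + lam • ψ = (1 - 2 * lam) • φ + lam • (φ + ψ) := by
      rw [smul_add]
      module
    rw [heq]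
    calc ‖(1 - 2 * lam) • φ + lam • (φ + ψ)‖
        ≤ ‖(1 - 2 * lam) • φ‖ + ‖lam • (φ + ψ)‖ := norm_add_le _ _
      _ = (1 - 2 * lam) * ‖φ‖ + lam * ‖φ + ψ‖ := by
          rw [norm_smul, norm_smul, Real.norm_eq_abs, Real.norm_eq_abs,
            abs_of_nonneg (by linarith), abs_of_nonneg hlam0]
      _ ≤ ‖φ‖ * (1 - 2 * δ (ε / d) * lam) := by nlinarith
  · rw [min_eq_right hl]
    have heq : (1 - lam) • φ + lam • ψ = (2 * lam - 1) • ψ + (1 - lam) • (φ + ψ) := by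
      rw [smul_add]
      module
    rw [heq]
    calc ‖(2 * lam - 1) • ψ + (1 - lam) • (φ + ψ)‖
        ≤ ‖(2 * lam - 1) • ψ‖ + ‖(1 - lam) • (φ + ψ)‖ := norm_add_le _ _
      _ = (2 * lam - 1) * ‖ψ‖ + (1 - lam) * ‖φ + ψ‖ := by
          rw [norm_smul, norm_smul, Real.norm_eq_abs, Real.norm_eq_abs,
            abs_of_nonneg (by linarith), abs_of_nonneg (by linarith)]
      _ ≤ ‖φ‖ * (1 - 2 * δ (ε / d) * (1 - lam)) := by nlinarith
end

section
/- Let $H$ be a Hilbert space and $T : H \to H$ a continuous map satisfying $\|T\varphi\| \le \|\varphi\|$ for all $\varphi$. Let $A$ be a segmenting matrix with diagonal elements $d_k \in [0,1]$ such that $\sum_{k=1}^\infty \min\{d_k, 1-d_k\} = \infty$. Let $\varphi_1 \in H$ and define $\phi_k := \sum_{j=1}^k a_{kj}\varphi_j$, $\varphi_{k+1} := T(\phi_k)$. Then there exists a subsequence $\{\phi_{k_j}\}$ such that $(I - T)\phi_{k_j} \to 0$ strongly. -/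
open Filter

lemma mann_aux_convex_norm_sq {H : Type*} [NormedAddCommGroup H] [InnerProductSpace ℝ H]
    (x y : H) (t : ℝ) :
    ‖(1 - t) • x + t • y‖ ^ 2
      = (1 - t) * ‖x‖ ^ 2 + t * ‖y‖ ^ 2 - t * (1 - t) * ‖x - y‖ ^ 2 := by
  have h1 := norm_add_sq_real ((1 - t) • x) (t • y)
  have h2 : ‖x - y‖ ^ 2 = ‖x‖ ^ 2 - 2 * (inner ℝ x y : ℝ) + ‖y‖ ^ 2 := norm_sub_sq_real x y
  rw [h1, h2, norm_smul, norm_smul, real_inner_smul_left, real_inner_smul_right]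
  simp only [Real.norm_eq_abs, mul_pow, sq_abs]
  ring

/-- for the segmenting Mann iteration of a continuous map `T`
with `‖T φ‖ ≤ ‖φ‖`, some subsequence of `(I - T) φ_k` tends to zero. -/
theorem mann_subsequence_asymptotic_regularity
    {H : Type*} [NormedAddCommGroup H] [InnerProductSpace ℝ H] [CompleteSpace H]
    (T : H → H) (hTcont : Continuous T) (hTnorm : ∀ φ : H, ‖T φ‖ ≤ ‖φ‖)
    (a : ℕ → ℕ → ℝ)
    (hnonneg : ∀ i j, 0 ≤ a i j)
    (htri : ∀ i j, i < j → a i j = 0)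
    (hrow : ∀ i, 1 ≤ i → ∑ j ∈ Finset.Icc 1 i, a i j = 1)
    (hseg : ∀ i, 1 ≤ i → ∀ j, 1 ≤ j → j ≤ i →
      a (i + 1) j = (1 - a (i + 1) (i + 1)) * a i j)
    (d : ℕ → ℝ) (hd : ∀ k, d k = a (k + 1) (k + 1))
    (hd01 : ∀ k, 0 ≤ d k ∧ d k ≤ 1)
    (hdiv : Tendsto (fun n => ∑ k ∈ Finset.Icc 1 n, min (d k) (1 - d k))
      atTop atTop)
    (φ ϕ : ℕ → H)
    (hϕ : ∀ k, 1 ≤ k → ϕ k = ∑ j ∈ Finset.Icc 1 k, a k j • φ j)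
    (hφ : ∀ k, 1 ≤ k → φ (k + 1) = T (ϕ k)) :
    ∃ k : ℕ → ℕ, StrictMono k ∧ (∀ j, 1 ≤ k j) ∧
      Tendsto (fun j => ϕ (k j) - T (ϕ (k j))) atTop (nhds 0) := by
  set m : ℕ → ℝ := fun k => min (d k) (1 - d k) with hm
  set c : ℕ → ℝ := fun k => ‖ϕ k - T (ϕ k)‖ ^ 2 with hc
  have hm0 : ∀ k, 0 ≤ m k := fun k =>
    le_min (hd01 k).1 (by linarith [(hd01 k).2])
  have hc0 : ∀ k, 0 ≤ c k := fun k => sq_nonneg _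
  -- the Mann recursion
  have hrec : ∀ k, 1 ≤ k → ϕ (k + 1) = (1 - d k) • ϕ k + d k • T (ϕ k) := by
    intro k hk
    rw [hϕ (k + 1) (by omega), Finset.sum_Icc_succ_top (by omega)]
    have hcongr : ∀ j ∈ Finset.Icc 1 k,
        a (k + 1) j • φ j = (1 - d k) • (a k j • φ j) := by
      intro j hj
      rw [Finset.mem_Icc] at hj
      rw [hseg k hk j hj.1 hj.2, ← hd, mul_smul]
    rw [Finset.sum_congr rfl hcongr, ← Finset.smul_sum, ← hϕ k hk, hφ k hk, ← hd]
  -- key inequality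
  have hkey : ∀ k, 1 ≤ k → m k * c k ≤ 2 * (‖ϕ k‖ ^ 2 - ‖ϕ (k + 1)‖ ^ 2) := by
    intro k hk
    have hid := mann_aux_convex_norm_sq (ϕ k) (T (ϕ k)) (d k)
    rw [← hrec k hk] at hid
    have hd0 := (hd01 k).1
    have hd1 := (hd01 k).2
    have hy2 : ‖T (ϕ k)‖ ^ 2 ≤ ‖ϕ k‖ ^ 2 :=
      pow_le_pow_left₀ (norm_nonneg _) (hTnorm (ϕ k)) 2
    have hmin : m k ≤ 2 * (d k * (1 - d k)) := by
      rcases le_total (d k) (1 - d k) with h | h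
      · have : m k = d k := min_eq_left h
        nlinarith
      · have : m k = 1 - d k := min_eq_right h
        nlinarith
    have hmc : m k * c k ≤ 2 * (d k * (1 - d k)) * c k :=
      mul_le_mul_of_nonneg_right hmin (hc0 k)
    simp only [hc] at hmc ⊢
    nlinarith [mul_nonneg hd0 (sub_nonneg.mpr hy2)]
  -- telescoped bound
  have hbound : ∀ n, ∑ k ∈ Finset.Icc 1 n, m k * c k + 2 * ‖ϕ (n + 1)‖ ^ 2
      ≤ 2 * ‖ϕ 1‖ ^ 2 := by
    intro n
    induction n with
    | zero => simp
    | succ n ih =>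
      rw [Finset.sum_Icc_succ_top (by omega)]
      have := hkey (n + 1) (by omega)
      linarith
  have hB : ∀ n, ∑ k ∈ Finset.Icc 1 n, m k * c k ≤ 2 * ‖ϕ 1‖ ^ 2 := by
    intro n
    have := hbound n
    nlinarith [sq_nonneg ‖ϕ (n + 1)‖]
  -- frequently small
  have hfreq : ∀ n : ℕ, ∃ᶠ k in atTop, 1 ≤ k ∧ ‖ϕ k - T (ϕ k)‖ < 1 / ((n : ℝ) + 1) := by
    intro n
    rw [frequently_atTop]
    intro N
    by_contra hcon
    push_neg at hcon
    set ε : ℝ := 1 / ((n : ℝ) + 1) with hε'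
    have hε : 0 < ε := by positivity
    set N' := max N 1 with hN'
    have hN1 : 1 ≤ N' := le_max_right _ _
    have hlow : ∀ k, N' ≤ k → ε ^ 2 ≤ c k := by
      intro k hk
      have h1 : 1 ≤ k := le_trans hN1 hk
      have h2 := hcon k (le_trans (le_max_left _ _) hk) h1
      exact pow_le_pow_left₀ hε.le h2 2
    set C : ℝ := ∑ k ∈ Finset.Icc 1 (N' - 1), m k + (2 * ‖ϕ 1‖ ^ 2) / ε ^ 2 with hC
    have hS : ∀ nn, ∑ k ∈ Finset.Icc 1 nn, m k ≤ C := by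
      intro nn
      have hIoc : ∀ b : ℕ, Finset.Icc 1 b = Finset.Ioc 0 b := fun b => Finset.Icc_add_one_left_eq_Ioc 0 b
      rcases le_or_gt nn (N' - 1) with h | h
      · have hsub : Finset.Icc 1 nn ⊆ Finset.Icc 1 (N' - 1) :=
          Finset.Icc_subset_Icc le_rfl h
        have h1 : ∑ k ∈ Finset.Icc 1 nn, m k ≤ ∑ k ∈ Finset.Icc 1 (N' - 1), m k :=
          Finset.sum_le_sum_of_subset_of_nonneg hsub (fun k _ _ => hm0 k)
        have h2 : 0 ≤ (2 * ‖ϕ 1‖ ^ 2) / ε ^ 2 := by positivity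
        rw [hC]; linarith
      · have hsplit : ∑ k ∈ Finset.Ioc 0 (N' - 1), m k + ∑ k ∈ Finset.Ioc (N' - 1) nn, m k
            = ∑ k ∈ Finset.Ioc 0 nn, m k :=
          Finset.sum_Ioc_consecutive _ (Nat.zero_le _) h.le
        have htail : ε ^ 2 * ∑ k ∈ Finset.Ioc (N' - 1) nn, m k
            ≤ ∑ k ∈ Finset.Ioc (N' - 1) nn, m k * c k := by
          rw [Finset.mul_sum]
          refine Finset.sum_le_sum fun k hk => ?_
          rw [Finset.mem_Ioc] at hk
          have hk' : N' ≤ k := by omega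
          have := hlow k hk'
          nlinarith [hm0 k]
        have hsub : Finset.Ioc (N' - 1) nn ⊆ Finset.Icc 1 nn := by
          intro k hk
          rw [Finset.mem_Ioc] at hk
          rw [Finset.mem_Icc]
          omega
        have htail2 : ∑ k ∈ Finset.Ioc (N' - 1) nn, m k * c k
            ≤ ∑ k ∈ Finset.Icc 1 nn, m k * c k :=
          Finset.sum_le_sum_of_subset_of_nonneg hsub
            (fun k _ _ => mul_nonneg (hm0 k) (hc0 k))
        have hBB := hB nn
        have hε2 : (0:ℝ) < ε ^ 2 := by positivity
        have hkeyineq : ε ^ 2 * ∑ k ∈ Finset.Ioc (N' - 1) nn, m k ≤ 2 * ‖ϕ 1‖ ^ 2 := by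
          linarith
        have h3 : ∑ k ∈ Finset.Ioc (N' - 1) nn, m k ≤ (2 * ‖ϕ 1‖ ^ 2) / ε ^ 2 := by
          rw [le_div_iff₀ hε2]
          linarith [hkeyineq]
        rw [hIoc nn, ← hsplit, hC, hIoc (N' - 1)]
        linarith
    have := (hdiv.eventually (eventually_gt_atTop C)).exists
    obtain ⟨nn, hnn⟩ := this
    exact absurd (hS nn) (not_le.mpr hnn)
  obtain ⟨k, hkmono, hk⟩ := extraction_forall_of_frequently hfreq
  refine ⟨k, hkmono, fun j => (hk j).1, ?_⟩
  rw [tendsto_zero_iff_norm_tendsto_zero]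
  exact squeeze_zero (fun j => norm_nonneg _) (fun j => (hk j).2.le)
    tendsto_one_div_add_atTop_nhds_zero_nat
end

section
/- Let $H$ be a Hilbert space, $T : H \to H$ nonexpansive with $T(0)=0$ (hence $\|T\varphi\| \le \|\varphi\|$), $d_k \in [0,1]$ with $\sum_k d_k(1-d_k) = \infty$, and suppose $T$ has a fixed point. Define $\phi_{k+1} := (1-d_k)\phi_k + d_k T(\phi_k)$ from any $\phi_1 \in H$. Then $\|\phi_k - T(\phi_k)\| \to 0$ as $k \to \infty$. -/
open Filter

/-- Groetsch's asymptotic regularity for the segmenting Mann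
iteration of a nonexpansive map with a fixed point. -/
theorem groetsch_asymptotic_regularity
    {H : Type*} [NormedAddCommGroup H] [InnerProductSpace ℝ H] [CompleteSpace H]
    (T : H → H) (hTne : ∀ x y : H, ‖T x - T y‖ ≤ ‖x - y‖) (hT0 : T 0 = 0)
    (hfix : ∃ x : H, T x = x)
    (d : ℕ → ℝ) (hd01 : ∀ k, 0 ≤ d k ∧ d k ≤ 1)
    (hdiv : Tendsto (fun n => ∑ k ∈ Finset.range n, d k * (1 - d k))
      atTop atTop)
    (φ : ℕ → H)
    (hrec : ∀ k, φ (k + 1) = (1 - d k) • φ k + d k • T (φ k)) :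
    Tendsto (fun k => ‖φ k - T (φ k)‖) atTop (nhds 0) := by
  obtain ⟨p, hp⟩ := hfix
  set a : ℕ → ℝ := fun k => ‖φ k - T (φ k)‖ with ha
  -- key convexity inequality in Hilbert space
  have key : ∀ (t : ℝ) (x y : H), 0 ≤ t → t ≤ 1 → ‖y‖ ≤ ‖x‖ →
      ‖(1 - t) • x + t • y‖ ^ 2 ≤ ‖x‖ ^ 2 - t * (1 - t) * ‖x - y‖ ^ 2 := by
    intro t x y ht0 ht1 hxy
    have h1 : ‖(1 - t) • x + t • y‖ ^ 2
        = (1 - t) ^ 2 * ‖x‖ ^ 2 + 2 * ((1 - t) * t) * inner ℝ x y + t ^ 2 * ‖y‖ ^ 2 := by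
      rw [norm_add_sq_real, real_inner_smul_left, real_inner_smul_right,
        norm_smul, norm_smul]
      simp only [Real.norm_eq_abs, abs_of_nonneg ht0,
        abs_of_nonneg (by linarith : (0:ℝ) ≤ 1 - t)]
      ring
    have h2 : ‖x - y‖ ^ 2 = ‖x‖ ^ 2 - 2 * inner ℝ x y + ‖y‖ ^ 2 :=
      norm_sub_sq_real x y
    nlinarith [mul_nonneg ht0 (mul_nonneg (sub_nonneg.2 hxy)
      (by positivity : (0:ℝ) ≤ ‖x‖ + ‖y‖))]
  -- Fejér-type estimate
  have fej : ∀ k, ‖φ (k+1) - p‖ ^ 2 ≤ ‖φ k - p‖ ^ 2 - d k * (1 - d k) * a k ^ 2 := by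
    intro k
    have h1 : φ (k+1) - p = (1 - d k) • (φ k - p) + d k • (T (φ k) - p) := by
      rw [hrec k]; module
    have h2 : ‖T (φ k) - p‖ ≤ ‖φ k - p‖ := by
      have := hTne (φ k) p; rwa [hp] at this
    have h3 : (φ k - p) - (T (φ k) - p) = φ k - T (φ k) := by abel
    calc ‖φ (k+1) - p‖ ^ 2
        = ‖(1 - d k) • (φ k - p) + d k • (T (φ k) - p)‖ ^ 2 := by rw [h1]
      _ ≤ ‖φ k - p‖ ^ 2 - d k * (1 - d k) * ‖(φ k - p) - (T (φ k) - p)‖ ^ 2 :=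
          key (d k) _ _ (hd01 k).1 (hd01 k).2 h2
      _ = ‖φ k - p‖ ^ 2 - d k * (1 - d k) * a k ^ 2 := by rw [h3]
  -- telescoping bound
  have sumle : ∀ n, ∑ k ∈ Finset.range n, d k * (1 - d k) * a k ^ 2 ≤ ‖φ 0 - p‖ ^ 2 := by
    intro n
    have h := Finset.sum_le_sum (fun k (_ : k ∈ Finset.range n) => by
      have := fej k
      linarith : ∀ k ∈ Finset.range n,
        d k * (1 - d k) * a k ^ 2 ≤ ‖φ k - p‖ ^ 2 - ‖φ (k+1) - p‖ ^ 2)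
    rw [Finset.sum_range_sub' (fun k => ‖φ k - p‖ ^ 2) n] at h
    have := sq_nonneg ‖φ n - p‖
    linarith
  -- residual norm is nonincreasing
  have amono : ∀ k, a (k+1) ≤ a k := by
    intro k
    have h1 : φ (k+1) - T (φ k) = (1 - d k) • (φ k - T (φ k)) := by rw [hrec k]; module
    have h3 : φ (k+1) - φ k = d k • (T (φ k) - φ k) := by rw [hrec k]; module
    have h2 : ‖T (φ (k+1)) - T (φ k)‖ ≤ d k * a k := by
      calc ‖T (φ (k+1)) - T (φ k)‖ ≤ ‖φ (k+1) - φ k‖ := hTne _ _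
        _ = ‖d k • (T (φ k) - φ k)‖ := by rw [h3]
        _ = |d k| * ‖T (φ k) - φ k‖ := by rw [norm_smul, Real.norm_eq_abs]
        _ = d k * a k := by
            rw [abs_of_nonneg (hd01 k).1, ha, ← norm_neg]; congr 2; abel
    calc a (k+1) = ‖(φ (k+1) - T (φ k)) - (T (φ (k+1)) - T (φ k))‖ := by
          show ‖φ (k+1) - T (φ (k+1))‖ = _; congr 1; abel
      _ ≤ ‖φ (k+1) - T (φ k)‖ + ‖T (φ (k+1)) - T (φ k)‖ := norm_sub_le _ _
      _ ≤ (1 - d k) * a k + d k * a k := by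
          refine add_le_add ?_ h2
          rw [h1, norm_smul, Real.norm_eq_abs,
            abs_of_nonneg (by linarith [(hd01 k).2] : (0:ℝ) ≤ 1 - d k)]
      _ = a k := by ring
  have hanti : Antitone a := antitone_nat_of_succ_le amono
  have anonneg : ∀ k, 0 ≤ a k := fun k => norm_nonneg _
  have hbdd : BddBelow (Set.range a) := ⟨0, fun x ⟨k, hk⟩ => hk ▸ anonneg k⟩
  have hlim : Tendsto a atTop (nhds (⨅ n, a n)) := tendsto_atTop_ciInf hanti hbdd
  set L := ⨅ n, a n with hLdef
  have hL0 : 0 ≤ L := le_ciInf anonneg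
  have hLle : ∀ n, L ≤ a n := fun n => ciInf_le hbdd n
  rcases hL0.lt_or_eq with hL | hL
  · exfalso
    have hC : ∀ n, (∑ k ∈ Finset.range n, d k * (1 - d k)) * L ^ 2 ≤ ‖φ 0 - p‖ ^ 2 := by
      intro n
      calc (∑ k ∈ Finset.range n, d k * (1 - d k)) * L ^ 2
          = ∑ k ∈ Finset.range n, d k * (1 - d k) * L ^ 2 := by rw [Finset.sum_mul]
        _ ≤ ∑ k ∈ Finset.range n, d k * (1 - d k) * a k ^ 2 := by
            refine Finset.sum_le_sum fun k _ => ?_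
            have h1 : L ^ 2 ≤ a k ^ 2 := pow_le_pow_left₀ hL0 (hLle k) 2
            have h2 : 0 ≤ d k * (1 - d k) :=
              mul_nonneg (hd01 k).1 (by linarith [(hd01 k).2])
            exact mul_le_mul_of_nonneg_left h1 h2
        _ ≤ ‖φ 0 - p‖ ^ 2 := sumle n
    obtain ⟨n, hn⟩ := (hdiv.eventually_gt_atTop (‖φ 0 - p‖ ^ 2 / L ^ 2)).exists
    have hL2 : (0:ℝ) < L ^ 2 := by positivity
    rw [div_lt_iff₀ hL2] at hn
    have := hC n
    linarith
  · rw [← hL] at hlim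
    exact hlim
end

section
/- Let $H$ be a Hilbert space, $E \subset H$ closed and convex, $T : E \to E$ nonexpansive with $T(E)$ relatively compact in $H$, and $d_k \in [0,1]$ with $\sum_k d_k(1-d_k) = \infty$. Suppose $T$ has a fixed point in $E$. Then for any $\phi_1 \in E$ the segmenting Mann sequence $\phi_{k+1} = (1-d_k)\phi_k + d_k T(\phi_k)$ converges strongly to a fixed point of $T$. -/
open Filter

lemma mann_hilbert_id {H : Type*} [NormedAddCommGroup H] [InnerProductSpace ℝ H]
    (t : ℝ) (u v : H) :
    ‖(1-t)•u + t•v‖^2 = (1-t)*‖u‖^2 + t*‖v‖^2 - t*(1-t)*‖u-v‖^2 := by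
  have h1 := norm_add_sq_real ((1-t)•u) (t•v)
  have h2 := norm_sub_sq_real u v
  rw [norm_smul, norm_smul, real_inner_smul_left, real_inner_smul_right] at h1
  simp only [Real.norm_eq_abs] at h1
  rw [h1, h2, mul_pow, mul_pow, sq_abs, sq_abs]
  ring

/-- strong convergence of the segmenting Mann iteration of a
nonexpansive self-map of a closed convex set with relatively compact range. -/
theorem mann_strong_convergence
    {H : Type*} [NormedAddCommGroup H] [InnerProductSpace ℝ H] [CompleteSpace H]
    (E : Set H) (hEclosed : IsClosed E) (hEconv : Convex ℝ E)
    (T : H → H) (hmaps : Set.MapsTo T E E)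
    (hTne : ∀ x ∈ E, ∀ y ∈ E, ‖T x - T y‖ ≤ ‖x - y‖)
    (hcompact : IsCompact (closure (T '' E)))
    (hfix : ∃ x ∈ E, T x = x)
    (d : ℕ → ℝ) (hd01 : ∀ k, 0 ≤ d k ∧ d k ≤ 1)
    (hdiv : Tendsto (fun n => ∑ k ∈ Finset.range n, d k * (1 - d k))
      atTop atTop)
    (φ : ℕ → H) (hφ0 : φ 0 ∈ E)
    (hrec : ∀ k, φ (k + 1) = (1 - d k) • φ k + d k • T (φ k)) :
    ∃ x ∈ E, T x = x ∧ Tendsto φ atTop (nhds x) := by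
  obtain ⟨p, hpE, hpfix⟩ := hfix
  -- all iterates lie in E
  have hmem : ∀ k, φ k ∈ E := by
    intro k
    induction k with
    | zero => exact hφ0
    | succ k ih =>
      rw [hrec k]
      exact hEconv ih (hmaps ih) (by linarith [(hd01 k).1, (hd01 k).2]) (hd01 k).1 (by ring)
  -- Fejér monotonicity with respect to any fixed point
  have fejer : ∀ q ∈ E, T q = q → ∀ k, ‖φ (k+1) - q‖ ≤ ‖φ k - q‖ := by
    intro q hqE hq k
    have hsplit : φ (k+1) - q = (1 - d k) • (φ k - q) + d k • (T (φ k) - q) := by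
      rw [hrec k]; module
    have hTle : ‖T (φ k) - q‖ ≤ ‖φ k - q‖ := by
      have := hTne (φ k) (hmem k) q hqE
      rwa [hq] at this
    calc ‖φ (k+1) - q‖ = ‖(1 - d k) • (φ k - q) + d k • (T (φ k) - q)‖ := by rw [hsplit]
      _ ≤ ‖(1 - d k) • (φ k - q)‖ + ‖d k • (T (φ k) - q)‖ := norm_add_le _ _
      _ = |1 - d k| * ‖φ k - q‖ + |d k| * ‖T (φ k) - q‖ := by
          rw [norm_smul, norm_smul, Real.norm_eq_abs, Real.norm_eq_abs]
      _ = (1 - d k) * ‖φ k - q‖ + d k * ‖T (φ k) - q‖ := by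
          rw [abs_of_nonneg (by linarith [(hd01 k).2]), abs_of_nonneg (hd01 k).1]
      _ ≤ (1 - d k) * ‖φ k - q‖ + d k * ‖φ k - q‖ := by
          have := (hd01 k).1
          nlinarith
      _ = ‖φ k - q‖ := by ring
  set c : ℕ → ℝ := fun k => ‖φ k - T (φ k)‖ with hc_def
  have hc_nonneg : ∀ k, 0 ≤ c k := fun k => norm_nonneg _
  -- c is nonincreasing
  have hc_anti : ∀ k, c (k+1) ≤ c k := by
    intro k
    have h1 : φ (k+1) - T (φ k) = (1 - d k) • (φ k - T (φ k)) := by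
      rw [hrec k]; module
    have h2 : φ k - φ (k+1) = d k • (φ k - T (φ k)) := by
      rw [hrec k]; module
    have hTle : ‖T (φ k) - T (φ (k+1))‖ ≤ ‖φ k - φ (k+1)‖ :=
      hTne (φ k) (hmem k) (φ (k+1)) (hmem (k+1))
    calc c (k+1) = ‖(φ (k+1) - T (φ k)) + (T (φ k) - T (φ (k+1)))‖ := by
          simp only [hc_def]; congr 1; abel
      _ ≤ ‖φ (k+1) - T (φ k)‖ + ‖T (φ k) - T (φ (k+1))‖ := norm_add_le _ _
      _ ≤ ‖(1 - d k) • (φ k - T (φ k))‖ + ‖d k • (φ k - T (φ k))‖ := by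
          rw [h1]; gcongr; rw [h2] at hTle; exact hTle
      _ = |1 - d k| * c k + |d k| * c k := by
          rw [norm_smul, norm_smul, Real.norm_eq_abs, Real.norm_eq_abs]
      _ = c k := by
          rw [abs_of_nonneg (by linarith [(hd01 k).2]), abs_of_nonneg (hd01 k).1]; ring
  have hc_anti' : Antitone c := antitone_nat_of_succ_le hc_anti
  set b : ℕ → ℝ := fun k => ‖φ k - p‖^2 with hb_def
  -- key inequality
  have hkey : ∀ k, b (k+1) + d k * (1 - d k) * c k ^ 2 ≤ b k := by
    intro k
    have hsplit : φ (k+1) - p = (1 - d k) • (φ k - p) + d k • (T (φ k) - p) := by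
      rw [hrec k]; module
    have hid := mann_hilbert_id (d k) (φ k - p) (T (φ k) - p)
    have hdiff : (φ k - p) - (T (φ k) - p) = φ k - T (φ k) := by abel
    rw [hdiff] at hid
    have hTle : ‖T (φ k) - p‖ ≤ ‖φ k - p‖ := by
      have := hTne (φ k) (hmem k) p hpE
      rwa [hpfix] at this
    have hTle2 : ‖T (φ k) - p‖^2 ≤ ‖φ k - p‖^2 := by
      apply sq_le_sq' _ hTle
      nlinarith [norm_nonneg (T (φ k) - p), norm_nonneg (φ k - p)]
    have hd := hd01 k
    simp only [hb_def, hc_def]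
    rw [hsplit, hid]
    nlinarith
  -- partial sums bound
  have hsum : ∀ n, (∑ k ∈ Finset.range n, d k * (1 - d k) * c k ^ 2) + b n ≤ b 0 := by
    intro n
    induction n with
    | zero => simp
    | succ n ih =>
      rw [Finset.sum_range_succ]
      have := hkey n
      linarith
  -- the infimum of c is zero
  have hc_bdd : BddBelow (Set.range c) := ⟨0, fun x ⟨k, hk⟩ => hk ▸ hc_nonneg k⟩
  have hc_tendsto : Tendsto c atTop (nhds (⨅ k, c k)) :=
    tendsto_atTop_ciInf hc_anti' hc_bdd
  have hL0 : (⨅ k, c k) = 0 := by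
    by_contra hL
    have hLpos : 0 < ⨅ k, c k := by
      rcases lt_or_eq_of_le (le_ciInf hc_nonneg) with h | h
      · exact h
      · exact absurd h.symm hL
    set L := ⨅ k, c k
    have hLle : ∀ k, L ≤ c k := fun k => ciInf_le hc_bdd k
    -- then partial sums of d(1-d) are bounded
    have hbound : ∀ n, L^2 * (∑ k ∈ Finset.range n, d k * (1 - d k)) ≤ b 0 := by
      intro n
      have h1 : L^2 * (∑ k ∈ Finset.range n, d k * (1 - d k))
          ≤ ∑ k ∈ Finset.range n, d k * (1 - d k) * c k ^ 2 := by
        rw [Finset.mul_sum]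
        apply Finset.sum_le_sum
        intro k _
        have hd := hd01 k
        have hLk := hLle k
        have hdd : 0 ≤ d k * (1 - d k) := mul_nonneg hd.1 (by linarith)
        have hsq : L^2 ≤ c k ^ 2 := by nlinarith [hc_nonneg k]
        nlinarith [mul_le_mul_of_nonneg_left hsq hdd]
      have h2 := hsum n
      have h3 : 0 ≤ b n := sq_nonneg _
      linarith
    obtain ⟨n, hn⟩ := (tendsto_atTop.mp hdiv (b 0 / L^2 + 1)).exists
    have := hbound n
    have hL2 : 0 < L^2 := by positivity
    have hcancel : b 0 / L^2 * L^2 = b 0 := div_mul_cancel₀ _ (ne_of_gt hL2)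
    nlinarith [mul_le_mul_of_nonneg_left hn (le_of_lt hL2)]
  rw [hL0] at hc_tendsto
  -- extract a convergent subsequence of T ∘ φ
  have hTmem : ∀ n, T (φ n) ∈ closure (T '' E) :=
    fun n => subset_closure ⟨φ n, hmem n, rfl⟩
  obtain ⟨q, _, g, hg_mono, hTg⟩ := hcompact.tendsto_subseq hTmem
  -- φ ∘ g → q
  have hcg : Tendsto (fun j => c (g j)) atTop (nhds 0) :=
    hc_tendsto.comp hg_mono.tendsto_atTop
  have hdiff0 : Tendsto (fun j => φ (g j) - T (φ (g j))) atTop (nhds 0) :=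
    tendsto_zero_iff_norm_tendsto_zero.mpr hcg
  have hφg : Tendsto (fun j => φ (g j)) atTop (nhds q) := by
    have : Tendsto (fun j => (φ (g j) - T (φ (g j))) + T (φ (g j))) atTop (nhds (0 + q)) :=
      hdiff0.add hTg
    simpa using this
  have hqE : q ∈ E :=
    hEclosed.mem_of_tendsto hφg (Eventually.of_forall fun j => hmem (g j))
  -- q is a fixed point
  have hTq : T q = q := by
    have h1 : Tendsto (fun j => T (φ (g j))) atTop (nhds (T q)) := by
      rw [tendsto_iff_norm_sub_tendsto_zero]
      apply squeeze_zero (fun j => norm_nonneg _)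
        (fun j => hTne (φ (g j)) (hmem (g j)) q hqE)
      rw [← tendsto_iff_norm_sub_tendsto_zero]
      exact hφg
    exact tendsto_nhds_unique h1 hTg
  refine ⟨q, hqE, hTq, ?_⟩
  -- now ‖φ k - q‖ is nonincreasing with a subsequence tending to 0
  set a : ℕ → ℝ := fun k => ‖φ k - q‖ with ha_def
  have ha_anti : Antitone a := antitone_nat_of_succ_le (fejer q hqE hTq)
  have ha_bdd : BddBelow (Set.range a) := ⟨0, fun x ⟨k, hk⟩ => hk ▸ norm_nonneg _⟩
  have ha_tendsto : Tendsto a atTop (nhds (⨅ k, a k)) :=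
    tendsto_atTop_ciInf ha_anti ha_bdd
  have hag : Tendsto (fun j => a (g j)) atTop (nhds (⨅ k, a k)) :=
    ha_tendsto.comp hg_mono.tendsto_atTop
  have hag0 : Tendsto (fun j => a (g j)) atTop (nhds 0) := by
    simp only [ha_def]
    rw [← tendsto_iff_norm_sub_tendsto_zero]
    exact hφg
  have : (⨅ k, a k) = 0 := tendsto_nhds_unique hag hag0
  rw [this] at ha_tendsto
  rw [tendsto_iff_norm_sub_tendsto_zero]
  exact ha_tendsto
end
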